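/- Let p be a prime, r ≥ 1, and G_r = Z/p^r Z. Let a ∈ G_r be nonzero with p^{r−1} dividing a (i.e., a generates the unique subgroup of order p). If ⟨a_1,...,a_k⟩ is a multiset of nonzero elements of G_r such that no subset (including the empty set) sums to a, then for every such multiset the set of subset sums {∑_{j∈S} a_j : S ⊆ {1,...,k}} has at least k+1 elements. -/

import Mathlib

lemma key_mult (p : ℕ) (hp : p.Prime) (r : ℕ) (hr : 1 ≤ r)
    (a x : ZMod (p ^ r)) (ha : a ≠ 0) (hx : x ≠ 0)
    (hdvd : ∃ b : ZMod (p ^ r), a = (p : ZMod (p ^ r)) ^ (r - 1) * b) :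
    ∃ c : ℕ, (c : ZMod (p ^ r)) * x = a := by
  haveI : NeZero (p ^ r) := ⟨pow_ne_zero r hp.pos.ne'⟩
  obtain ⟨b, hb⟩ := hdvd
  set v := x.val with hv
  have hv0 : v ≠ 0 := by
    intro h
    apply hx
    have := ZMod.natCast_rightInverse (n := p ^ r) x
    rw [← this, ← hv, h, Nat.cast_zero]
  set s := v.factorization p with hs
  set m := v / p ^ s with hm
  have hvm : p ^ s * m = v := Nat.ordProj_mul_ordCompl_eq_self v p
  have hpm : ¬ p ∣ m := Nat.not_dvd_ordCompl hp hv0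
  have hslt : s < r := by
    have h1 : p ^ s ≤ v := Nat.le_of_dvd (Nat.pos_of_ne_zero hv0) (Nat.ordProj_dvd v p)
    have h2 : v < p ^ r := ZMod.val_lt x
    exact (pow_lt_pow_iff_right₀ hp.one_lt).mp (lt_of_le_of_lt h1 h2)
  have hunit : IsUnit (m : ZMod (p ^ r)) := by
    rw [ZMod.isUnit_iff_coprime]
    exact (Nat.coprime_comm.mp (hp.coprime_iff_not_dvd.mpr hpm)).pow_right r
  have hmu : (m : ZMod (p ^ r)) * (m : ZMod (p ^ r))⁻¹ = 1 := ZMod.mul_inv_of_unit _ hunit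
  set c0 : ZMod (p ^ r) := (p : ZMod (p ^ r)) ^ (r - 1 - s) * (m : ZMod (p ^ r))⁻¹ * b with hc0
  have hxv : x = (p : ZMod (p ^ r)) ^ s * (m : ZMod (p ^ r)) := by
    have := ZMod.natCast_rightInverse (n := p ^ r) x
    rw [← this, ← hv, ← hvm]
    push_cast
    ring
  have hmul : c0 * x = a := by
    rw [hc0, hxv, hb]
    have hpow : (p : ZMod (p ^ r)) ^ (r - 1 - s) * (p : ZMod (p ^ r)) ^ s
        = (p : ZMod (p ^ r)) ^ (r - 1) := by
      rw [← pow_add]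
      congr 1
      omega
    calc (p : ZMod (p ^ r)) ^ (r - 1 - s) * (m : ZMod (p ^ r))⁻¹ * b *
          ((p : ZMod (p ^ r)) ^ s * (m : ZMod (p ^ r)))
        = ((p : ZMod (p ^ r)) ^ (r - 1 - s) * (p : ZMod (p ^ r)) ^ s) * b *
          ((m : ZMod (p ^ r)) * (m : ZMod (p ^ r))⁻¹) := by ring
      _ = (p : ZMod (p ^ r)) ^ (r - 1) * b := by rw [hpow, hmu, mul_one]
  refine ⟨c0.val, ?_⟩
  rw [ZMod.natCast_rightInverse c0, hmul]

lemma aux_card (p : ℕ) (hp : p.Prime) (r : ℕ) (hr : 1 ≤ r)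
    (a : ZMod (p ^ r)) (ha : a ≠ 0)
    (hdvd : ∃ b : ZMod (p ^ r), a = (p : ZMod (p ^ r)) ^ (r - 1) * b)
    (M : Multiset (ZMod (p ^ r))) (hM0 : ∀ x ∈ M, x ≠ 0)
    (havoid : ∀ S ≤ M, S.sum ≠ a) :
    M.card + 1 ≤ ((M.powerset.map Multiset.sum).toFinset).card := by
  induction M using Multiset.induction with
  | empty => simp
  | cons x T ih =>
    have hx0 : x ≠ 0 := hM0 x (Multiset.mem_cons_self x T)
    have hT0 : ∀ y ∈ T, y ≠ 0 := fun y hy => hM0 y (Multiset.mem_cons_of_mem hy)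
    have hTav : ∀ S ≤ T, S.sum ≠ a := fun S hS =>
      havoid S (le_trans hS (Multiset.le_cons_self T x))
    have hIH := ih hT0 hTav
    set F := (T.powerset.map Multiset.sum).toFinset with hF
    set F' := (((x ::ₘ T).powerset).map Multiset.sum).toFinset with hF'
    have hmemF : ∀ g, g ∈ F ↔ ∃ S ≤ T, S.sum = g := by
      intro g
      simp only [hF, Multiset.mem_toFinset, Multiset.mem_map, Multiset.mem_powerset]
    have hmemF' : ∀ g, g ∈ F' ↔ ∃ S ≤ x ::ₘ T, S.sum = g := by
      intro g
      simp only [hF', Multiset.mem_toFinset, Multiset.mem_map, Multiset.mem_powerset]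
    have hsub : F ⊆ F' := by
      intro g hg
      rw [hmemF] at hg
      obtain ⟨S, hS, hSg⟩ := hg
      exact (hmemF' g).mpr ⟨S, le_trans hS (Multiset.le_cons_self T x), hSg⟩
    by_cases hss : F' ⊆ F
    · exfalso
      have hclosed : ∀ g ∈ F, x + g ∈ F := by
        intro g hg
        obtain ⟨S, hS, hSg⟩ := (hmemF g).mp hg
        apply hss
        rw [hmemF']
        exact ⟨x ::ₘ S, Multiset.cons_le_cons x hS, by rw [Multiset.sum_cons, hSg]⟩
      have h0 : (0 : ZMod (p ^ r)) ∈ F := (hmemF 0).mpr ⟨0, Multiset.zero_le T, rfl⟩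
      have hmulmem : ∀ c : ℕ, (c : ZMod (p ^ r)) * x ∈ F := by
        intro c
        induction c with
        | zero => simpa using h0
        | succ n ihn =>
          have := hclosed _ ihn
          push_cast
          convert this using 1
          ring
      obtain ⟨c, hc⟩ := key_mult p hp r hr a x ha hx0 hdvd
      have : a ∈ F := hc ▸ hmulmem c
      obtain ⟨S, hS, hSa⟩ := (hmemF a).mp this
      exact hTav S hS hSa
    · have hssub : F ⊂ F' := ⟨hsub, hss⟩
      have := Finset.card_lt_card hssub
      simp only [Multiset.card_cons]
      omega

theorem stmt_2 (p : ℕ) (hp : p.Prime) (r : ℕ) (hr : 1 ≤ r)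
    (a : ZMod (p ^ r)) (ha : a ≠ 0) (hdvd : ∃ b : ZMod (p ^ r), a = (p : ZMod (p ^ r)) ^ (r - 1) * b)
    (M : Multiset (ZMod (p ^ r))) (hM0 : ∀ x ∈ M, x ≠ 0)
    (havoid : ∀ S ≤ M, S.sum ≠ a) :
    M.card + 1 ≤ {g : ZMod (p ^ r) | ∃ S ≤ M, S.sum = g}.ncard := by
  have hset : {g : ZMod (p ^ r) | ∃ S ≤ M, S.sum = g}
      = ↑((M.powerset.map Multiset.sum).toFinset) := by
    ext g
    simp only [Set.mem_setOf_eq, Finset.coe_sort_coe, Finset.mem_coe,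
      Multiset.mem_toFinset, Multiset.mem_map, Multiset.mem_powerset]
  rw [hset, Set.ncard_coe_finset]
  exact aux_card p hp r hr a ha hdvd M hM0 havoid
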